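/- For α ∈ [1/2, 1], the map Φ⁻(x,y) = (1/(x−y), (1−x)(1−y)/(x−y)) maps Ω_α^− injectively onto Λ_α^−, and its inverse is H⁻(w,z) = ((2w + 1 − √(1 + 4wz))/(2w), (2w − 1 − √(1 + 4wz))/(2w)), i.e. for every (w,z) ∈ Λ_α^−, H⁻(w,z) ∈ Ω_α^− and Φ⁻(H⁻(w,z)) = (w,z). -/

import Mathlib

open Real MeasureTheory Filter Set
open scoped Classical

noncomputable section

/-- The Gauss map `T x = 1/x - ⌊1/x⌋`. -/
def gaussMap (x : ℝ) : ℝ := 1/x - ⌊1/x⌋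

/-- The natural extension `𝐓(x,y) = (1/x - ⌊1/x⌋, 1/y - ⌊1/x⌋)`. -/
def natExt (p : ℝ × ℝ) : ℝ × ℝ := (1/p.1 - ⌊1/p.1⌋, 1/p.2 - ⌊1/p.1⌋)

/-- `(x₀, y₀) = 𝐓(x, ∞) = (1/x - ⌊1/x⌋, -⌊1/x⌋)`. -/
def initPt (x : ℝ) : ℝ × ℝ := (1/x - ⌊1/x⌋, -(⌊1/x⌋ : ℝ))

/-- Partial quotient `a_n = ⌊1 / T^{n-1} x⌋` (indexed from 1). -/
def cfA (x : ℝ) (n : ℕ) : ℤ := ⌊1 / (gaussMap^[n-1] x)⌋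

/-- The pair `(p_n, q_n)` of numerator and denominator of the `n`-th convergent. -/
def pq (x : ℝ) : ℕ → ℤ × ℤ
  | 0 => (0, 1)
  | 1 => (1, ⌊1/x⌋)
  | n+2 => (cfA x (n+2) * (pq x (n+1)).1 + (pq x n).1,
            cfA x (n+2) * (pq x (n+1)).2 + (pq x n).2)

def pconv (x : ℝ) (n : ℕ) : ℤ := (pq x n).1
def qconv (x : ℝ) (n : ℕ) : ℤ := (pq x n).2

/-- `θ_n(x) = q_n |q_n x - p_n|`. -/
def theta (x : ℝ) (n : ℕ) : ℝ := (qconv x n : ℝ) * |(qconv x n : ℝ) * x - (pconv x n : ℝ)|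

/-- `Ω = (0,1) × (-∞,-1)`. -/
def Ωset : Set (ℝ × ℝ) := Set.Ioo (0:ℝ) 1 ×ˢ Set.Iio (-1 : ℝ)

/-- `Ω_α = {(x,y) ∈ Ω : 1/(x-y) < α}`. -/
def Ωα (α : ℝ) : Set (ℝ × ℝ) := {p ∈ Ωset | 1 / (p.1 - p.2) < α}

/-- First return time to `Ω_α` (defined as `sInf`, so `0` when undefined). -/
def tauα (α : ℝ) (p : ℝ × ℝ) : ℕ := sInf {n : ℕ | 1 ≤ n ∧ natExt^[n] p ∈ Ωα α}

/-- First return map `𝐓_α`. -/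
def retMap (α : ℝ) (p : ℝ × ℝ) : ℝ × ℝ := natExt^[tauα α p] p

/-- The invariant measure `μ` with density `(log 2)⁻¹ (x-y)⁻²` on `Ω`. -/
def μnat : Measure (ℝ × ℝ) :=
  (volume.restrict Ωset).withDensity
    (fun p => ENNReal.ofReal ((Real.log 2)⁻¹ * ((p.1 - p.2)⁻¹)^2))

/-- `c_α = (log 2 · μ(Ω_α))⁻¹`, explicitly. -/
def cα (α : ℝ) : ℝ := if 1/2 < α then (1 - α + Real.log 2 + Real.log α)⁻¹ else α⁻¹

/-- The probability measure `μ_α` with density `c_α (x-y)⁻²` on `Ω_α`. -/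
def μmeas (α : ℝ) : Measure (ℝ × ℝ) :=
  (volume.restrict (Ωα α)).withDensity
    (fun p => ENNReal.ofReal (cα α * ((p.1 - p.2)⁻¹)^2))

/-- `Ω_α⁻ = {(x,y) ∈ Ω : α < x, y < αx/(α-x)}`. -/
def Ωminus (α : ℝ) : Set (ℝ × ℝ) := {p ∈ Ωset | α < p.1 ∧ p.2 < α * p.1 / (α - p.1)}

/-- `Φ⁻(x,y) = (1/(x-y), (1-x)(1-y)/(x-y))`. -/
def Φminus (p : ℝ × ℝ) : ℝ × ℝ := (1/(p.1 - p.2), (1 - p.1) * (1 - p.2) / (p.1 - p.2))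

/-- `Λ_α = {(w,z) : 0 < w < α, 0 < z < α, w + z < 1}`. -/
def Λα (α : ℝ) : Set (ℝ × ℝ) :=
  {p | 0 < p.1 ∧ p.1 < α ∧ 0 < p.2 ∧ p.2 < α ∧ p.1 + p.2 < 1}

/-- `Λ_α⁻ = {(w,z) ∈ Λ_α : z < w - α + √(1-4αw)}`. -/
def Λαminus (α : ℝ) : Set (ℝ × ℝ) :=
  {p ∈ Λα α | p.2 < p.1 - α + Real.sqrt (1 - 4*α*p.1)}

/-- `H⁻(w,z) = ((2w+1-√(1+4wz))/(2w), (2w-1-√(1+4wz))/(2w))`. -/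
def Hminus (p : ℝ × ℝ) : ℝ × ℝ :=
  ((2*p.1 + 1 - Real.sqrt (1 + 4*p.1*p.2)) / (2*p.1),
   (2*p.1 - 1 - Real.sqrt (1 + 4*p.1*p.2)) / (2*p.1))

section Proof14

private lemma stmt14_h1 {α x y : ℝ} (hαx : α < x) (hyc : y < α * x / (α - x)) :
    x*y - α*y + α*x < 0 := by
  have hneg : α - x < 0 := by linarith
  have h := (lt_div_iff_of_neg hneg).mp hyc
  nlinarith [h]

private lemma stmt14_fwd {α x y : ℝ} (hα1 : 1/2 ≤ α) (hα2 : α ≤ 1) (hx1 : x < 1)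
    (hy : y < -1) (hαx : α < x) (hyc : y < α * x / (α - x)) :
    Φminus (x, y) ∈ Λαminus α := by
  have hα0 : (0:ℝ) < α := by linarith
  have hx0 : (0:ℝ) < x := by linarith
  have hd : (0:ℝ) < x - y := by linarith
  have h1 : x*y - α*y + α*x < 0 := stmt14_h1 hαx hyc
  have hxα : (0:ℝ) < x - α := by linarith
  have hF : (0:ℝ) < -(x*y - α*y + α*x) := by linarith
  have key : 0 ≤ α*x^2 - x + α := by
    nlinarith [sq_nonneg (2*α*x - 1), sq_nonneg (2*α - 1)]
  have hwα : 1 < α * (x - y) := by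
    nlinarith [key, mul_pos hα0 hF, hxα]
  have hzα : (1-x)*(1-y) < α * (x - y) := by
    nlinarith [mul_pos hF (show (0:ℝ) < x + α - 1 by linarith),
      mul_nonneg (show (0:ℝ) ≤ 1+2*α by linarith) (sq_nonneg (x - 1/2))]
  have hG : 0 ≤ (α+2)*x^2 - 2*(α+1)*x + 2*α := by
    nlinarith [sq_nonneg ((α+2)*x - (α+1)),
      mul_nonneg (show (0:ℝ) ≤ α - 1/2 by linarith) (show (0:ℝ) ≤ α + 5/2 by linarith)]
  have hw1 : 1 + (1-x)*(1-y) < x - y := by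
    nlinarith [hG, mul_pos hx0 hF, hxα]
  refine ⟨⟨?_, ?_, ?_, ?_, ?_⟩, ?_⟩
  · exact div_pos one_pos hd
  · show 1/(x-y) < α
    rw [div_lt_iff₀ hd]; linarith [hwα]
  · exact div_pos (mul_pos (by linarith) (by linarith)) hd
  · show (1-x)*(1-y)/(x-y) < α
    rw [div_lt_iff₀ hd]; linarith [hzα]
  · show 1/(x-y) + (1-x)*(1-y)/(x-y) < 1
    rw [← add_div, div_lt_one hd]; linarith
  · show (1-x)*(1-y)/(x-y) < 1/(x-y) - α + Real.sqrt (1 - 4*α*(1/(x-y)))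
    have ht0 : 0 < (-(x+y))/(x-y) := div_pos (by linarith) hd
    have hpos : 0 < (-(4:ℝ))*(x*y + α*(x-y))/(x-y)^2 :=
      div_pos (by nlinarith [h1]) (by positivity)
    have key6 : 1 - 4*α*(1/(x-y)) - ((-(x+y))/(x-y))^2
        = (-(4:ℝ))*(x*y + α*(x-y))/(x-y)^2 := by
      field_simp
      ring
    have ht2 : ((-(x+y))/(x-y))^2 < 1 - 4*α*(1/(x-y)) := by linarith [key6 ▸ hpos]
    have hsq : (-(x+y))/(x-y) < Real.sqrt (1 - 4*α*(1/(x-y))) :=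
      (Real.lt_sqrt ht0.le).mpr ht2
    have hid : (1-x)*(1-y)/(x-y) - 1/(x-y) + α
        = (-(x+y))/(x-y) + (x*y + α*(x-y))/(x-y) := by
      field_simp
      ring
    have hneg2 : (x*y + α*(x-y))/(x-y) < 0 :=
      div_neg_of_neg_of_pos (by nlinarith [h1]) hd
    linarith

private lemma stmt14_leftinv {x y : ℝ} (hx0 : 0 < x) (hx1 : x < 1) (hy : y < -1) :
    Hminus (Φminus (x, y)) = (x, y) := by
  have hd : (0:ℝ) < x - y := by linarith
  have hd' : x - y ≠ 0 := ne_of_gt hd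
  have hq : 1 + 4*(1/(x-y))*((1-x)*(1-y)/(x-y)) = ((2 - x - y)/(x-y))^2 := by
    field_simp
    ring
  simp only [Hminus, Φminus]
  rw [hq, Real.sqrt_sq (le_of_lt (div_pos (by linarith) hd))]
  refine Prod.ext ?_ ?_
  · show (2*(1/(x-y)) + 1 - (2 - x - y)/(x-y)) / (2*(1/(x-y))) = x
    field_simp
    ring
  · show (2*(1/(x-y)) - 1 - (2 - x - y)/(x-y)) / (2*(1/(x-y))) = y
    field_simp
    ring

set_option maxHeartbeats 1000000 in
private lemma stmt14_inv {α w z : ℝ} (hα1 : 1/2 ≤ α) (hα2 : α ≤ 1)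
    (hp : (w, z) ∈ Λαminus α) :
    Hminus (w, z) ∈ Ωminus α ∧ Φminus (Hminus (w, z)) = (w, z) := by
  simp only [Λαminus, Λα, Set.mem_sep_iff, Set.mem_setOf_eq] at hp
  obtain ⟨⟨hw0, hwα, hz0, hzα, hwz⟩, h6⟩ := hp
  have hα0 : (0:ℝ) < α := by linarith
  have h4aw : 0 < 1 - 4*α*w := by
    by_contra h
    push_neg at h
    rw [Real.sqrt_eq_zero_of_nonpos (by linarith)] at h6
    linarith
  have hH : Hminus (w, z)
      = ((2*w + 1 - Real.sqrt (1 + 4*w*z))/(2*w),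
         (2*w - 1 - Real.sqrt (1 + 4*w*z))/(2*w)) := by
    simp [Hminus]
  rw [hH]
  set s0 : ℝ := Real.sqrt (1 - 4*α*w) with hs0def
  have hs0sq : s0^2 = 1 - 4*α*w := Real.sq_sqrt h4aw.le
  have hs0pos : 0 < s0 := Real.sqrt_pos.mpr h4aw
  have hw12 : w < 1/2 := by nlinarith
  have h2w : (0:ℝ) < 2*w := by linarith
  have h2w' : (2:ℝ)*w ≠ 0 := ne_of_gt h2w
  have hw' : w ≠ 0 := ne_of_gt hw0
  have hs0le : s0 ≤ 1 - 2*α*w := by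
    nlinarith [hs0sq, hs0pos, sq_nonneg (2*α*w), mul_pos hα0 hw0]
  set s : ℝ := Real.sqrt (1 + 4*w*z) with hsdef
  have hwz0 : 0 < 4*w*z := by positivity
  have hssq : s^2 = 1 + 4*w*z := Real.sq_sqrt (by linarith)
  have hs1 : 1 < s := by
    nlinarith [Real.sqrt_nonneg (1 + 4*w*z), hssq]
  have hslt : s < 2*w + s0 := by
    nlinarith [hssq, hs0sq, Real.sqrt_nonneg (1 + 4*w*z), hs0pos,
      mul_pos hw0 (show (0:ℝ) < w - α + s0 - z by linarith)]
  have hXα : α < (2*w + 1 - s)/(2*w) := by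
    rw [lt_div_iff₀ h2w]
    nlinarith [hslt, hs0le]
  have hX1 : (2*w + 1 - s)/(2*w) < 1 := by
    rw [div_lt_one h2w]; linarith
  have hX0 : 0 < (2*w + 1 - s)/(2*w) := by linarith
  have hY : (2*w - 1 - s)/(2*w) < -1 := by
    rw [div_lt_iff₀ h2w]; linarith
  have hYX : (2*w + 1 - s)/(2*w) - (2*w - 1 - s)/(2*w) = 1/w := by
    rw [div_sub_div_same, show (2*w + 1 - s) - (2*w - 1 - s) = 2 by ring,
      div_eq_div_iff h2w' hw']
    ring
  have hnum : (2*w - s)^2 < 1 - 4*α*w := by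
    have ha : 0 ≤ s - 2*w := by linarith
    have hb : s - 2*w < s0 := by linarith
    have hc := mul_self_lt_mul_self ha hb
    nlinarith [hc, hs0sq]
  have hkey : ((2*w + 1 - s)/(2*w)) * ((2*w - 1 - s)/(2*w))
      + α*((2*w + 1 - s)/(2*w) - (2*w - 1 - s)/(2*w)) < 0 := by
    have he : ((2*w + 1 - s)/(2*w)) * ((2*w - 1 - s)/(2*w))
        + α*((2*w + 1 - s)/(2*w) - (2*w - 1 - s)/(2*w))
        = ((2*w - s)^2 - 1 + 4*α*w)/(4*w^2) := by
      field_simp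
      ring
    rw [he]
    exact div_neg_of_neg_of_pos (by linarith [hnum]) (by positivity)
  have hyc : (2*w - 1 - s)/(2*w) < α * ((2*w + 1 - s)/(2*w)) / (α - (2*w + 1 - s)/(2*w)) := by
    rw [lt_div_iff_of_neg (by linarith : α - (2*w + 1 - s)/(2*w) < 0)]
    nlinarith [hkey]
  refine ⟨⟨⟨⟨hX0, hX1⟩, hY⟩, hXα, hyc⟩, ?_⟩
  have hc2 : (1 - (2*w + 1 - s)/(2*w))*(1 - (2*w - 1 - s)/(2*w)) = (s^2 - 1)/(4*w^2) := by
    field_simp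
    ring
  simp only [Φminus]
  refine Prod.ext ?_ ?_
  · show 1/((2*w + 1 - s)/(2*w) - (2*w - 1 - s)/(2*w)) = w
    rw [hYX, one_div_one_div]
  · show (1 - (2*w + 1 - s)/(2*w))*(1 - (2*w - 1 - s)/(2*w))
        / ((2*w + 1 - s)/(2*w) - (2*w - 1 - s)/(2*w)) = z
    rw [hc2, hYX, hssq]
    field_simp
    ring

end Proof14

/-- for `α ∈ [1/2,1]`, `Φ⁻` maps `Ω_α⁻` bijectively onto `Λ_α⁻`, with
inverse `H⁻`. -/
theorem stmt_14 (α : ℝ) (hα : α ∈ Set.Icc (1/2:ℝ) 1) :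
    Set.BijOn Φminus (Ωminus α) (Λαminus α) ∧
    ∀ p ∈ Λαminus α, Hminus p ∈ Ωminus α ∧ Φminus (Hminus p) = p := by
  obtain ⟨hα1, hα2⟩ := hα
  have hinv : ∀ p ∈ Λαminus α, Hminus p ∈ Ωminus α ∧ Φminus (Hminus p) = p := by
    rintro ⟨w, z⟩ hp
    exact stmt14_inv hα1 hα2 hp
  refine ⟨⟨?_, ?_, ?_⟩, hinv⟩
  · rintro ⟨x, y⟩ ⟨⟨⟨hx0, hx1⟩, hy⟩, hαx, hyc⟩
    exact stmt14_fwd hα1 hα2 hx1 hy hαx hyc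
  · rintro ⟨x, y⟩ ⟨⟨⟨hx0, hx1⟩, hy⟩, -, -⟩ ⟨x', y'⟩ ⟨⟨⟨hx0', hx1'⟩, hy'⟩, -, -⟩ h
    have e1 := stmt14_leftinv hx0 hx1 hy
    have e2 := stmt14_leftinv hx0' hx1' hy'
    rw [← e1, ← e2, h]
  · rintro ⟨w, z⟩ hp
    exact ⟨Hminus (w, z), (hinv _ hp).1, (hinv _ hp).2⟩
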